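/- Let 0 < r < s and let α, β, γ ∈ (0, 1/2]. If R_r(α) = R_r(β) + R_r(γ), then R_s(α) > R_s(β) + R_s(γ), where R_t denotes the binary Rényi entropy of order t. -/

import Mathlib

open Real

/-- Binary Tsallis/Shannon entropy `H_r`. -/
noncomputable def Hent (r μ : ℝ) : ℝ :=
  if r = 1 then -(μ * Real.log μ) - (1 - μ) * Real.log (1 - μ)
  else (1 - μ ^ r - (1 - μ) ^ r) / (r - 1)

/-- Binary Rényi entropy `R_t`. -/
noncomputable def Rent (t α : ℝ) : ℝ :=
  if t = 1 then -(α * Real.log α) - (1 - α) * Real.log (1 - α)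
  else Real.log (α ^ t + (1 - α) ^ t) / (1 - t)

/-- A procedural mixture set: `mix μ a b` denotes `μ a ⊕ (1-μ) b`, `approx` is the
equivalence relation `≈`.  The axioms are connectedness, commutativity and associativity. -/
structure IsPMS {S : Type*} (mix : ℝ → S → S → S) (approx : S → S → Prop) : Prop where
  equiv : Equivalence approx
  connect : ∀ a b : S, approx (mix 1 a b) a
  comm : ∀ μ : ℝ, 0 ≤ μ → μ ≤ 1 → ∀ a b : S, approx (mix μ a b) (mix (1 - μ) b a)
  assoc : ∀ μ lam : ℝ, 0 ≤ μ → μ < 1 → 0 ≤ lam → lam < 1 → μ + lam ≤ 1 →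
    ∀ a b c : S,
      approx (mix (1 - lam) (mix (μ / (1 - lam)) a b) c)
        (mix μ a (mix ((1 - lam - μ) / (1 - μ)) b c))

/-- The indifference relation (symmetric part) of `R`. -/
def Indiff {S : Type*} (R : S → S → Prop) (a b : S) : Prop := R a b ∧ R b a

/-- The strict (asymmetric) part of `R`: `a ≻ b`. -/
def StrictRel {S : Type*} (R : S → S → Prop) (a b : S) : Prop := R a b ∧ ¬ R b a

/-- `R` is a weak order: complete and transitive. -/
def WeakOrder {S : Type*} (R : S → S → Prop) : Prop :=
  (∀ a b : S, R a b ∨ R b a) ∧ ∀ a b c : S, R a b → R b c → R a c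

/-- Continuity of `R` with respect to mixture weights. -/
def ContinuousRel {S : Type*} (mix : ℝ → S → S → S) (R : S → S → Prop) : Prop :=
  ∀ a b c : S,
    IsClosed {μ : ℝ | μ ∈ Set.Icc (0 : ℝ) 1 ∧ R (mix μ a b) c} ∧
    IsClosed {μ : ℝ | μ ∈ Set.Icc (0 : ℝ) 1 ∧ R c (mix μ a b)}

/-- The von Neumann-Morgenstern independence axiom. -/
def IndepAxiom {S : Type*} (mix : ℝ → S → S → S) (R : S → S → Prop) : Prop :=
  ∀ a a' b : S, ∀ μ : ℝ, 0 < μ → μ < 1 →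
    (R a a' ↔ R (mix μ a b) (mix μ a' b))

/-- `U` represents `R`: `a ≿ b ↔ U a ≥ U b`. -/
def Represents {S : Type*} (U : S → ℝ) (R : S → S → Prop) : Prop :=
  ∀ a b : S, R a b ↔ U b ≤ U a

/-- `U` is a mixture entropy representation of `R` with parameters `q`, `r`. -/
def MixEntRep {S : Type*} (mix : ℝ → S → S → S) (R : S → S → Prop)
    (U : S → ℝ) (q r : ℝ) : Prop :=
  Represents U R ∧
    ∀ a b : S, ∀ μ : ℝ, 0 ≤ μ → μ ≤ 1 →
      U (mix μ a b) = μ ^ r * U a + (1 - μ) ^ r * U b + q * Hent r μ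



open Real Set Filter Topology

noncomputable def sg (x : ℝ) : ℝ := exp x / (1 + exp x)
noncomputable def fs (x : ℝ) : ℝ := Real.log (1 + exp x)
noncomputable def Wf (x : ℝ) : ℝ := fs x - x * sg x
noncomputable def rh (x : ℝ) : ℝ := x * (sg x * (1 - sg x))
noncomputable def rhd (x : ℝ) : ℝ := sg x * (1 - sg x) * (1 + x * (1 - 2 * sg x))

lemma one_add_exp_pos (x : ℝ) : 0 < 1 + exp x := by positivity

lemma sg_pos (x : ℝ) : 0 < sg x := div_pos (exp_pos x) (one_add_exp_pos x)

lemma sg_lt_one (x : ℝ) : sg x < 1 := by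
  rw [sg, div_lt_one (one_add_exp_pos x)]; linarith

lemma hasDerivAt_fs (x : ℝ) : HasDerivAt fs (sg x) x := by
  have h1 : HasDerivAt (fun y : ℝ => 1 + exp y) (exp x) x := (Real.hasDerivAt_exp x).const_add 1
  have h2 := (h1.log (one_add_exp_pos x).ne')
  rw [show fs = fun y => Real.log (1 + exp y) from rfl]
  simpa [sg, div_eq_mul_inv, mul_comm] using h2

lemma hasDerivAt_sg (x : ℝ) : HasDerivAt sg (sg x * (1 - sg x)) x := by
  have h1 : HasDerivAt (fun y : ℝ => 1 + exp y) (exp x) x := (Real.hasDerivAt_exp x).const_add 1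
  have h2 := (Real.hasDerivAt_exp x).div h1 (one_add_exp_pos x).ne'
  have : sg x * (1 - sg x) = (exp x * (1 + exp x) - exp x * exp x) / (1 + exp x) ^ 2 := by
    have hne := (one_add_exp_pos x).ne'; simp only [sg]; field_simp
  rw [this]; exact h2

lemma hasDerivAt_Wf (x : ℝ) : HasDerivAt Wf (-rh x) x := by
  have h := (hasDerivAt_fs x).sub ((hasDerivAt_id x).mul (hasDerivAt_sg x))
  have e : sg x - (1 * sg x + id x * (sg x * (1 - sg x))) = -rh x := by
    simp only [rh, id]; ring
  rw [show Wf = fun y => fs y - y * sg y from rfl, ← e]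
  exact h

lemma hasDerivAt_rh (x : ℝ) : HasDerivAt rh (rhd x) x := by
  have h := (hasDerivAt_id x).mul ((hasDerivAt_sg x).mul ((hasDerivAt_sg x).const_sub 1))
  have e : sg x * (1 - sg x) + x * (sg x * (1 - sg x) * (1 - sg x) +
      -(sg x * (sg x * (1 - sg x)))) = rhd x := by
    simp only [rhd]; ring
  rw [show rh = fun y => y * (sg y * (1 - sg y)) from rfl, ← e]
  exact h.congr_deriv (by simp only [id, Pi.mul_apply]; ring)

lemma fs_gt (x : ℝ) : x < fs x := by
  rw [fs]
  have : exp x < 1 + exp x := by linarith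
  calc x = Real.log (exp x) := (Real.log_exp x).symm
    _ < Real.log (1 + exp x) := Real.log_lt_log (exp_pos x) this

lemma Wf_pos (x : ℝ) : 0 < Wf x := by
  rcases le_or_gt x 0 with h | h
  · have h1 : x * sg x ≤ 0 := mul_nonpos_of_nonpos_of_nonneg h (sg_pos x).le
    have h2 : 0 < fs x := by
      rw [fs]; apply Real.log_pos; have := exp_pos x; linarith
    rw [Wf]; linarith
  · have : x * sg x < x * 1 := by
      exact mul_lt_mul_of_pos_left (sg_lt_one x) h
    have := fs_gt x
    rw [Wf]; nlinarith

lemma Wf_alt (x : ℝ) : Wf x = fs (-x) + x * (1 - sg x) := by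
  have h1 : fs (-x) = fs x - x := by
    rw [fs, fs]
    have : 1 + exp (-x) = (1 + exp x) * exp (-x) := by
      rw [Real.exp_neg]
      field_simp
      ring
    rw [this, Real.log_mul (by positivity) (exp_pos _).ne', Real.log_exp]
    ring
  rw [h1, Wf]; ring

lemma Wf_tendsto : Tendsto Wf atTop (𝓝 0) := by
  have h1 : Tendsto (fun x : ℝ => fs (-x)) atTop (𝓝 0) := by
    have hc : ContinuousAt fs 0 := by
      apply ContinuousAt.log
      · exact (continuous_const.add Real.continuous_exp).continuousAt
      · simpa using (one_add_exp_pos 0).ne'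
    have : Tendsto (fun x : ℝ => -x) atTop atBot := tendsto_neg_atTop_atBot
    have h2 : Tendsto Real.exp atBot (𝓝 0) := Real.tendsto_exp_atBot
    have h3 : Tendsto (fun x : ℝ => fs (-x)) atTop (𝓝 (Real.log (1 + 0))) := by
      apply Tendsto.log
      · exact (tendsto_const_nhds.add (h2.comp this))
      · norm_num
    simpa using h3
  have h2 : Tendsto (fun x : ℝ => x * (1 - sg x)) atTop (𝓝 0) := by
    apply squeeze_zero' (g := fun x : ℝ => x ^ 1 * exp (-x))
    · filter_upwards [eventually_ge_atTop (0:ℝ)] with x hx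
      exact mul_nonneg hx (by linarith [sg_lt_one x])
    · filter_upwards [eventually_ge_atTop (0:ℝ)] with x hx
      have : 1 - sg x = 1 / (1 + exp x) := by
        rw [sg]; field_simp; ring
      have hb : 1 - sg x ≤ exp (-x) := by
        have : 1 - sg x = 1 / (1 + exp x) := by rw [sg]; field_simp; ring
        rw [this, Real.exp_neg, ← one_div]
        exact one_div_le_one_div_of_le (exp_pos x) (by linarith)
      rw [pow_one]
      exact mul_le_mul_of_nonneg_left hb hx
    · exact tendsto_pow_mul_exp_neg_atTop_nhds_zero 1
  have := h1.add h2
  simp only [add_zero] at this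
  apply this.congr
  intro x; rw [Wf_alt]
section
open Real Set Filter Topology

lemma rh_pos {x : ℝ} (hx : 0 < x) : 0 < rh x := by
  have h1 := sg_pos x; have h2 := sg_lt_one x
  have h3 : 0 < 1 - sg x := by linarith
  rw [rh]; positivity

lemma sg_strictMono : StrictMono sg :=
  strictMono_of_hasDerivAt_pos (f' := fun x => sg x * (1 - sg x)) hasDerivAt_sg
    (fun x => mul_pos (sg_pos x) (by linarith [sg_lt_one x]))

lemma rhd_eq {x : ℝ} (hx : x ≠ 0) : rhd x = rh x * (1 / x + (1 - 2 * sg x)) := by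
  rw [rhd, rh]; field_simp

lemma ratio_anti {x y : ℝ} (hx : 0 < x) (hxy : x ≤ y) :
    1 / y + (1 - 2 * sg y) ≤ 1 / x + (1 - 2 * sg x) := by
  have h1 : 1 / y ≤ 1 / x := one_div_le_one_div_of_le hx hxy
  have h2 : sg x ≤ sg y := sg_strictMono.monotone hxy
  linarith

lemma hazard_bound {x : ℝ} (hx : 0 < x) : 0 ≤ rh x ^ 2 + rhd x * Wf x := by
  rcases le_or_gt 0 (rhd x) with h | h
  · have := Wf_pos x; nlinarith
  · obtain ⟨c, hc⟩ : ∃ c : ℝ, c = rhd x / rh x := ⟨_, rfl⟩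
    have hrx := rh_pos hx
    have hcneg : c < 0 := by rw [hc]; exact div_neg_of_neg_of_pos h hrx
    have hcne : c ≠ 0 := ne_of_lt hcneg
    have hcrh : c * rh x = rhd x := by rw [hc]; field_simp
    -- Step A: rh y ≤ rh x * exp (c * (y - x)) for y ≥ x
    have stepA : ∀ y ∈ Ici x, rh y ≤ rh x * exp (c * (y - x)) := by
      have hH : ∀ y : ℝ, HasDerivAt (fun z => rh z * exp (-c * (z - x)))
          ((rhd y - c * rh y) * exp (-c * (y - x))) y := by
        intro y
        have he : HasDerivAt (fun z : ℝ => exp (-c * (z - x))) (-c * exp (-c * (y - x))) y := by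
          have h1 : HasDerivAt (fun z : ℝ => -c * (z - x)) (-c) y := by
            simpa using (((hasDerivAt_id y).sub_const x).const_mul (-c))
          simpa [mul_comm] using (h1.exp)
        have := (hasDerivAt_rh y).mul he
        exact this.congr_deriv (by ring)
      have hanti : AntitoneOn (fun z => rh z * exp (-c * (z - x))) (Ici x) := by
        apply antitoneOn_of_deriv_nonpos (convex_Ici x)
        · exact fun y _ => ((hH y).continuousAt).continuousWithinAt
        · exact fun y _ => (hH y).differentiableAt.differentiableWithinAt
        · intro y hy
          rw [interior_Ici] at hy
          rw [(hH y).deriv]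
          have hyx : x ≤ y := le_of_lt hy
          have hry := rh_pos (lt_trans hx hy)
          have hratio : rhd y ≤ c * rh y := by
            have h1 : rhd y = rh y * (1 / y + (1 - 2 * sg y)) :=
              rhd_eq (ne_of_gt (lt_trans hx hy))
            have h2 : rhd x = rh x * (1 / x + (1 - 2 * sg x)) := rhd_eq (ne_of_gt hx)
            have h3 : c = 1 / x + (1 - 2 * sg x) := by
              rw [hc, h2, mul_comm, mul_div_assoc]
              field_simp
            rw [h1, h3, mul_comm (rh y)]
            exact mul_le_mul_of_nonneg_right (ratio_anti hx hyx) hry.le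
          have : rhd y - c * rh y ≤ 0 := by linarith
          exact mul_nonpos_of_nonpos_of_nonneg this (exp_pos _).le
      intro y hy
      have hle := hanti (self_mem_Ici) hy hy
      simp only [sub_self, mul_zero, neg_mul, neg_zero, Real.exp_zero, mul_one] at hle
      calc rh y = rh y * exp (-(c * (y - x))) * exp (c * (y - x)) := by
            rw [mul_assoc, ← Real.exp_add]; simp
        _ ≤ rh x * exp (c * (y - x)) :=
            mul_le_mul_of_nonneg_right hle (exp_pos _).le
    -- Step B
    have hB : ∀ y : ℝ, HasDerivAt (fun z => Wf z - rh x / (-c) * exp (c * (z - x)))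
        (-rh y + rh x * exp (c * (y - x))) y := by
      intro y
      have he : HasDerivAt (fun z : ℝ => exp (c * (z - x))) (c * exp (c * (y - x))) y := by
        have h1 : HasDerivAt (fun z : ℝ => c * (z - x)) c y := by
          simpa using (((hasDerivAt_id y).sub_const x).const_mul c)
        simpa [mul_comm] using (h1.exp)
      have := (hasDerivAt_Wf y).sub (he.const_mul (rh x / (-c)))
      refine this.congr_deriv ?_
      have h6 : rh x / (-c) * (c * exp (c * (y - x))) = -(rh x * exp (c * (y - x))) := by
        field_simp
      rw [h6]; ring
    have hmono : MonotoneOn (fun z => Wf z - rh x / (-c) * exp (c * (z - x))) (Ici x) := by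
      apply monotoneOn_of_deriv_nonneg (convex_Ici x)
      · exact fun y _ => ((hB y).continuousAt).continuousWithinAt
      · exact fun y _ => (hB y).differentiableAt.differentiableWithinAt
      · intro y hy
        rw [interior_Ici] at hy
        rw [(hB y).deriv]
        have := stepA y (mem_Ici.2 (le_of_lt hy))
        linarith
    have hlim : Tendsto (fun z => Wf z - rh x / (-c) * exp (c * (z - x))) atTop (𝓝 0) := by
      have h2 : Tendsto (fun z : ℝ => rh x / (-c) * exp (c * (z - x))) atTop (𝓝 0) := by
        have h3 : Tendsto (fun z : ℝ => exp (c * (z - x))) atTop (𝓝 0) := by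
          apply Real.tendsto_exp_atBot.comp
          have h4 : Tendsto (fun z : ℝ => z - x) atTop atTop :=
            tendsto_atTop_add_const_right _ (-x) tendsto_id
          exact h4.const_mul_atTop_of_neg hcneg
        simpa using (h3.const_mul (rh x / (-c)))
      simpa using Wf_tendsto.sub h2
    have hWx : Wf x ≤ rh x / (-c) := by
      have key : ∀ y, x ≤ y → Wf x - rh x / (-c) ≤
          Wf y - rh x / (-c) * exp (c * (y - x)) := by
        intro y hy
        have h5 := hmono self_mem_Ici hy hy
        simp only [sub_self, mul_zero, Real.exp_zero, mul_one] at h5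
        exact h5
      have h7 : Wf x - rh x / (-c) ≤ 0 :=
        ge_of_tendsto hlim (eventually_atTop.2 ⟨x, key⟩)
      linarith
    have h8 : (-c) * Wf x ≤ rh x := by
      rw [le_div_iff₀ (by linarith : (0:ℝ) < -c)] at hWx
      linarith [hWx]
    nlinarith [mul_le_mul_of_nonneg_right h8 hrx.le, hcrh, Wf_pos x]
section
open Real Set Filter Topology

noncomputable def hz (x : ℝ) : ℝ := rh x / Wf x

lemma hasDerivAt_hz (x : ℝ) :
    HasDerivAt hz ((rhd x * Wf x + rh x ^ 2) / Wf x ^ 2) x := by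
  have h := (hasDerivAt_rh x).div (hasDerivAt_Wf x) (Wf_pos x).ne'
  have e : (rhd x * Wf x - rh x * -rh x) / Wf x ^ 2 =
      (rhd x * Wf x + rh x ^ 2) / Wf x ^ 2 := by ring_nf
  rw [show hz = fun y => rh y / Wf y from rfl, ← e]
  exact h

lemma hz_mono : MonotoneOn hz (Ioi 0) := by
  apply monotoneOn_of_deriv_nonneg (convex_Ioi 0)
  · exact fun y _ => (hasDerivAt_hz y).continuousAt.continuousWithinAt
  · intro y hy
    exact (hasDerivAt_hz y).differentiableAt.differentiableWithinAt
  · intro y hy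
    rw [interior_Ioi] at hy
    rw [(hasDerivAt_hz y).deriv]
    apply div_nonneg _ (sq_nonneg _)
    have := hazard_bound hy
    linarith

noncomputable def psi (x : ℝ) : ℝ := x * hz x

lemma hz_pos {x : ℝ} (hx : 0 < x) : 0 < hz x := div_pos (rh_pos hx) (Wf_pos x)

lemma psi_strictMono : StrictMonoOn psi (Ioi 0) := by
  intro x hx y hy hxy
  rw [mem_Ioi] at hx hy
  have h1 : x * hz x < y * hz x := by
    exact mul_lt_mul_of_pos_right hxy (hz_pos hx)
  have h2 : y * hz x ≤ y * hz y :=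
    mul_le_mul_of_nonneg_left (hz_mono (mem_Ioi.2 hx) (mem_Ioi.2 hy) hxy.le) (by linarith)
  calc psi x = x * hz x := rfl
    _ < y * hz y := lt_of_lt_of_le h1 h2
    _ = psi y := rfl
end
section
open Real Set Filter Topology

variable (u : ℝ)

noncomputable def p1 (t : ℝ) : ℝ := sg (t * u)
noncomputable def p2 (t : ℝ) : ℝ := -fs (t * u) / t
noncomputable def dr (t : ℝ) : ℝ := psi (t * u) / u

lemma hasDerivAt_p1 (t : ℝ) :
    HasDerivAt (p1 u) (u * (sg (t * u) * (1 - sg (t * u)))) t := by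
  have h1 : HasDerivAt (fun z : ℝ => z * u) u t := by
    simpa using (hasDerivAt_id t).mul_const u
  have h2 := (hasDerivAt_sg (t * u)).comp t h1
  have : p1 u = sg ∘ fun z => z * u := rfl
  rw [this]
  simpa [mul_comm] using h2

lemma hasDerivAt_p2 {t : ℝ} (ht : t ≠ 0) :
    HasDerivAt (p2 u) (Wf (t * u) / t ^ 2) t := by
  have h1 : HasDerivAt (fun z : ℝ => z * u) u t := by
    simpa using (hasDerivAt_id t).mul_const u
  have h2 : HasDerivAt (fun z : ℝ => -fs (z * u)) (-(sg (t * u) * u)) t := by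
    exact (((hasDerivAt_fs (t * u)).comp t h1)).neg
  have h3 := h2.div (hasDerivAt_id t) ht
  have e : (-(sg (t * u) * u) * id t - -fs (t * u) * 1) / (id t) ^ 2 = Wf (t * u) / t ^ 2 := by
    simp only [id]
    rw [Wf]
    ring
  rw [show p2 u = fun z => -fs (z * u) / z from rfl, ← e]
  exact h3

variable {u}

lemma dr_strictMono (hu : 0 < u) : StrictMonoOn (dr u) (Ioi 0) := by
  intro a ha b hb hab
  rw [mem_Ioi] at ha hb
  have h1 : a * u < b * u := by exact mul_lt_mul_of_pos_right hab hu
  have h2 := psi_strictMono (mem_Ioi.2 (mul_pos ha hu)) (mem_Ioi.2 (mul_pos hb hu)) h1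
  show psi (a * u) / u < psi (b * u) / u
  exact div_lt_div_of_pos_right h2 hu

lemma p2_strictMono (hu : 0 < u) : StrictMonoOn (p2 u) (Ioi 0) := by
  apply strictMonoOn_of_deriv_pos (convex_Ioi 0)
  · intro t ht
    exact (hasDerivAt_p2 u (ne_of_gt ht)).continuousAt.continuousWithinAt
  · intro t ht
    rw [interior_Ioi] at ht
    rw [(hasDerivAt_p2 u (ne_of_gt ht)).deriv]
    exact div_pos (Wf_pos _) (pow_pos ht 2)

noncomputable def KK (t : ℝ) : ℝ :=
  if t = 1 then rh u / Wf u else (p1 u t - p1 u 1) / (p2 u t - p2 u 1)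

lemma KK_one (hu : 0 < u) : KK (u := u) 1 = dr u 1 := by
  rw [KK, if_pos rfl, dr, psi, one_mul, hz]
  rw [mul_div_assoc, mul_comm, div_mul_cancel₀ _ (ne_of_gt hu)]

lemma dr_eq (t : ℝ) (hu : 0 < u) (ht : 0 < t) :
    dr u t = u * (sg (t * u) * (1 - sg (t * u))) / (Wf (t * u) / t ^ 2) := by
  rw [dr, psi, hz, rh]
  field_simp [ne_of_gt hu, (Wf_pos (t*u)).ne']

lemma slope_mvt (hu : 0 < u) {a b : ℝ} (ha : 0 < a) (hab : a < b) :
    ∃ c ∈ Ioo a b, p1 u b - p1 u a = dr u c * (p2 u b - p2 u a) := by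
  obtain ⟨c, hc, hrat⟩ := exists_ratio_hasDerivAt_eq_ratio_slope (p1 u)
    (fun t => u * (sg (t * u) * (1 - sg (t * u)))) hab
    (fun t _ => (hasDerivAt_p1 u t).continuousAt.continuousWithinAt)
    (fun t _ => hasDerivAt_p1 u t)
    (p2 u) (fun t => Wf (t * u) / t ^ 2)
    (fun t ht => (hasDerivAt_p2 u (ne_of_gt (lt_of_lt_of_le ha ht.1))).continuousAt.continuousWithinAt)
    (fun t ht => hasDerivAt_p2 u (ne_of_gt (lt_trans ha ht.1)))
  refine ⟨c, hc, ?_⟩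
  have hc0 : 0 < c := lt_trans ha hc.1
  have hd2 : (0:ℝ) < Wf (c * u) / c ^ 2 := div_pos (Wf_pos _) (pow_pos hc0 2)
  rw [dr_eq c hu hc0, div_mul_eq_mul_div, eq_div_iff (ne_of_gt hd2)]
  linear_combination (-1 : ℝ) * hrat

lemma KK_eq_slope {t : ℝ} (ht : t ≠ 1) :
    KK (u := u) t = (p1 u t - p1 u 1) / (p2 u t - p2 u 1) := by
  rw [KK, if_neg ht]

lemma p2_sub_ne {t : ℝ} (hu : 0 < u) (ht0 : 0 < t) (ht : t ≠ 1) :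
    p2 u t - p2 u 1 ≠ 0 := by
  rcases lt_or_gt_of_ne ht with h | h
  · exact ne_of_lt (sub_neg.2 (p2_strictMono hu (mem_Ioi.2 ht0) (mem_Ioi.2 one_pos) h))
  · exact ne_of_gt (sub_pos.2 (p2_strictMono hu (mem_Ioi.2 one_pos) (mem_Ioi.2 ht0) h))

lemma KK_lt_of_lt_one (hu : 0 < u) {a : ℝ} (ha0 : 0 < a) (ha1 : a < 1) :
    ∃ c ∈ Ioo a 1, KK (u := u) a = dr u c := by
  obtain ⟨c, hc, heq⟩ := slope_mvt hu ha0 ha1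
  refine ⟨c, hc, ?_⟩
  rw [KK_eq_slope (ne_of_lt ha1)]
  have hne := p2_sub_ne hu ha0 (ne_of_lt ha1)
  rw [div_eq_iff hne]
  linear_combination -heq

lemma KK_gt_of_gt_one (hu : 0 < u) {b : ℝ} (hb : 1 < b) :
    ∃ c ∈ Ioo 1 b, KK (u := u) b = dr u c := by
  obtain ⟨c, hc, heq⟩ := slope_mvt hu one_pos hb
  refine ⟨c, hc, ?_⟩
  rw [KK_eq_slope (ne_of_gt hb)]
  have hne := p2_sub_ne hu (lt_trans one_pos hb) (ne_of_gt hb)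
  rw [div_eq_iff hne]
  linear_combination heq

lemma hasDerivAt_G (ξ : ℝ) {t : ℝ} (ht : t ≠ 0) :
    HasDerivAt (fun z => (p1 u z - p1 u 1) - dr u ξ * (p2 u z - p2 u 1))
      (u * (sg (t * u) * (1 - sg (t * u))) - dr u ξ * (Wf (t * u) / t ^ 2)) t := by
  have h1 := ((hasDerivAt_p1 u t).sub_const (p1 u 1))
  have h2 := (((hasDerivAt_p2 u ht).sub_const (p2 u 1)).const_mul (dr u ξ))
  exact h1.sub h2

lemma crux (hu : 0 < u) {r s : ℝ} (hr : 0 < r) (hrs : r < s) :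
    KK (u := u) r < KK (u := u) s := by
  have hdr1 : KK (u := u) 1 = dr u 1 := KK_one hu
  -- the G-function comparison on same side
  have same_lt : ∀ a b : ℝ, 0 < a → a < b → b < 1 → KK (u := u) a < KK (u := u) b := by
    intro a b ha hab hb1
    obtain ⟨ξ, hξ, hKb⟩ := KK_lt_of_lt_one hu (lt_trans ha hab) hb1
    have hξ0 : 0 < ξ := lt_trans (lt_trans ha hab) hξ.1
    set G := fun z => (p1 u z - p1 u 1) - dr u ξ * (p2 u z - p2 u 1) with hG
    have hanti : StrictAntiOn G (Icc a b) := by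
      apply strictAntiOn_of_deriv_neg (convex_Icc a b)
      · exact fun y _ => (hasDerivAt_G ξ (ne_of_gt (by
          rcases ‹y ∈ Icc a b› with ⟨h1, _⟩; linarith))).continuousAt.continuousWithinAt
      · intro y hy
        rw [interior_Icc] at hy
        have hy0 : 0 < y := lt_trans ha hy.1
        rw [(hasDerivAt_G ξ (ne_of_gt hy0)).deriv]
        have hlt : dr u y < dr u ξ :=
          dr_strictMono hu (mem_Ioi.2 hy0) (mem_Ioi.2 hξ0) (lt_trans hy.2 hξ.1)
        have hg' : (0:ℝ) < Wf (y * u) / y ^ 2 := div_pos (Wf_pos _) (pow_pos hy0 2)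
        have : u * (sg (y * u) * (1 - sg (y * u))) = dr u y * (Wf (y * u) / y ^ 2) := by
          rw [dr_eq y hu hy0, div_mul_cancel₀ _ (ne_of_gt hg')]
        rw [this]
        nlinarith [hg', hlt]
    have hGb : G b = 0 := by
      rw [hG]
      have hne := p2_sub_ne hu (lt_trans ha hab) (ne_of_lt hb1)
      have := KK_eq_slope (u := u) (ne_of_lt hb1)
      rw [this] at hKb
      field_simp at hKb
      simp only
      linarith [hKb]
    have hGa : 0 < G a := by
      have := hanti (left_mem_Icc.2 hab.le) (right_mem_Icc.2 hab.le) hab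
      rw [hGb] at this; linarith
    have hp2a : p2 u a - p2 u 1 < 0 :=
      sub_neg.2 (p2_strictMono hu (mem_Ioi.2 ha) (mem_Ioi.2 one_pos) (lt_trans hab hb1))
    rw [KK_eq_slope (ne_of_lt (lt_trans hab hb1)), hKb, div_lt_iff_of_neg hp2a]
    rw [hG] at hGa
    simp only at hGa
    linarith
  have same_gt : ∀ a b : ℝ, 1 < a → a < b → KK (u := u) a < KK (u := u) b := by
    intro a b ha hab
    obtain ⟨ξ, hξ, hKa⟩ := KK_gt_of_gt_one hu ha
    have hξ0 : 0 < ξ := lt_trans one_pos hξ.1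
    set G := fun z => (p1 u z - p1 u 1) - dr u ξ * (p2 u z - p2 u 1) with hG
    have hmono : StrictMonoOn G (Icc a b) := by
      apply strictMonoOn_of_deriv_pos (convex_Icc a b)
      · exact fun y hy => (hasDerivAt_G ξ (ne_of_gt (by
          rcases hy with ⟨h1, _⟩; linarith))).continuousAt.continuousWithinAt
      · intro y hy
        rw [interior_Icc] at hy
        have hy0 : 0 < y := by linarith [hy.1]
        rw [(hasDerivAt_G ξ (ne_of_gt hy0)).deriv]
        have hlt : dr u ξ < dr u y :=
          dr_strictMono hu (mem_Ioi.2 hξ0) (mem_Ioi.2 hy0) (lt_trans hξ.2 hy.1)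
        have hg' : (0:ℝ) < Wf (y * u) / y ^ 2 := div_pos (Wf_pos _) (pow_pos hy0 2)
        have : u * (sg (y * u) * (1 - sg (y * u))) = dr u y * (Wf (y * u) / y ^ 2) := by
          rw [dr_eq y hu hy0, div_mul_cancel₀ _ (ne_of_gt hg')]
        rw [this]
        nlinarith [hg', hlt]
    have hGa : G a = 0 := by
      rw [hG]
      have hne := p2_sub_ne hu (lt_trans one_pos ha) (ne_of_gt ha)
      have := KK_eq_slope (u := u) (ne_of_gt ha)
      rw [this] at hKa
      field_simp at hKa
      simp only
      linarith [hKa]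
    have hGb : 0 < G b := by
      have := hmono (left_mem_Icc.2 hab.le) (right_mem_Icc.2 hab.le) hab
      rw [hGa] at this; linarith
    have hp2b : 0 < p2 u b - p2 u 1 :=
      sub_pos.2 (p2_strictMono hu (mem_Ioi.2 one_pos) (mem_Ioi.2 (by linarith)) (lt_trans ha hab))
    rw [KK_eq_slope (ne_of_gt (lt_trans ha hab)), hKa, lt_div_iff₀ hp2b]
    rw [hG] at hGb
    simp only at hGb
    linarith
  have lt_one : ∀ a : ℝ, 0 < a → a < 1 → KK (u := u) a < KK (u := u) 1 := by
    intro a ha0 ha1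
    obtain ⟨c, hc, hKa⟩ := KK_lt_of_lt_one hu ha0 ha1
    rw [hKa, hdr1]
    exact dr_strictMono hu (mem_Ioi.2 (lt_trans ha0 hc.1)) (mem_Ioi.2 one_pos) hc.2
  have gt_one : ∀ b : ℝ, 1 < b → KK (u := u) 1 < KK (u := u) b := by
    intro b hb
    obtain ⟨c, hc, hKb⟩ := KK_gt_of_gt_one hu hb
    rw [hKb, hdr1]
    exact dr_strictMono hu (mem_Ioi.2 one_pos) (mem_Ioi.2 (lt_trans one_pos hc.1)) hc.1
  rcases lt_trichotomy s 1 with hs | hs | hs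
  · exact same_lt r s hr hrs hs
  · rw [hs]; exact lt_one r hr (hs ▸ hrs)
  · rcases lt_trichotomy r 1 with hr1 | hr1 | hr1
    · exact lt_trans (lt_one r hr hr1) (gt_one s hs)
    · rw [hr1]; exact gt_one s hs
    · exact same_gt r s hr1 hrs
end
section
open Real Set Filter Topology

noncomputable def uof (α : ℝ) : ℝ := Real.log (1 - α) - Real.log α

noncomputable def RRf (t u : ℝ) : ℝ :=
  if t = 1 then Wf u else (t * fs u - fs (t * u)) / (t - 1)

noncomputable def DD (t u : ℝ) : ℝ :=
  if t = 1 then -rh u else (t * sg u - t * sg (t * u)) / (t - 1)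

lemma gf_strictMono (u : ℝ) : StrictMono (fun t : ℝ => t * fs u - fs (t * u)) := by
  apply strictMono_of_hasDerivAt_pos (f' := fun t => fs u - u * sg (t * u))
  · intro t
    have h1 : HasDerivAt (fun z : ℝ => z * fs u) (fs u) t := by
      simpa using (hasDerivAt_id t).mul_const (fs u)
    have h2 : HasDerivAt (fun z : ℝ => fs (z * u)) (sg (t * u) * u) t :=
      (hasDerivAt_fs (t * u)).comp (h := fun z : ℝ => z * u) t (by simpa using (hasDerivAt_id t).mul_const u)
    have := h1.sub h2
    exact this.congr_deriv (by show _ = fs u - u * sg (t * u); ring)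
  · intro t
    have hs1 := sg_pos (t * u)
    have hs2 := sg_lt_one (t * u)
    rcases le_or_gt u 0 with h | h
    · have h3 : u * sg (t * u) ≤ 0 := mul_nonpos_of_nonpos_of_nonneg h hs1.le
      have h4 : 0 < fs u := by
        rw [fs]; apply Real.log_pos; have := exp_pos u; linarith
      linarith
    · have h3 : u * sg (t * u) < u * 1 := mul_lt_mul_of_pos_left hs2 h
      have h4 := fs_gt u
      linarith

lemma RRf_pos {t : ℝ} (ht : 0 < t) (u : ℝ) : 0 < RRf t u := by
  rcases eq_or_ne t 1 with h | h
  · rw [RRf, h, if_pos rfl]; exact Wf_pos u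
  · rw [RRf, if_neg h]
    have h0 : (fun t : ℝ => t * fs u - fs (t * u)) 1 = 0 := by simp
    rcases lt_or_gt_of_ne h with hlt | hgt
    · have := gf_strictMono u hlt
      rw [h0] at this
      exact div_pos_of_neg_of_neg (by simpa using this) (by linarith)
    · have := gf_strictMono u hgt
      rw [h0] at this
      exact div_pos (by simpa using this) (by linarith)

lemma hasDerivAt_RRf (t : ℝ) (u : ℝ) : HasDerivAt (fun z => RRf t z) (DD t u) u := by
  rcases eq_or_ne t 1 with h | h
  · subst h
    simp only [RRf, DD, if_pos rfl]
    exact hasDerivAt_Wf u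
  · simp only [RRf, DD, if_neg h]
    have h1 : HasDerivAt (fun z : ℝ => t * fs z) (t * sg u) u :=
      (hasDerivAt_fs u).const_mul t
    have h2 : HasDerivAt (fun z : ℝ => fs (t * z)) (sg (t * u) * t) u :=
      (hasDerivAt_fs (t * u)).comp u (by simpa using (hasDerivAt_id u).const_mul t)
    have := (h1.sub h2).div_const (t - 1)
    have e : (t * sg u - sg (t * u) * t) = (t * sg u - t * sg (t * u)) := by ring
    rw [e] at this
    exact this

lemma hasDerivAt_uof {α : ℝ} (h0 : 0 < α) (h1 : α < 1) :
    HasDerivAt uof (-(1 / (α * (1 - α)))) α := by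
  have ha : HasDerivAt (fun z : ℝ => Real.log (1 - z)) (-(1 - α)⁻¹) α := by
    have hi : HasDerivAt (fun z : ℝ => 1 - z) (-1) α := by
      simpa using (hasDerivAt_id α).const_sub 1
    have := (Real.hasDerivAt_log (by linarith : (1:ℝ) - α ≠ 0)).comp α hi
    simpa [mul_comm, Function.comp_def] using this
  have hb : HasDerivAt Real.log α⁻¹ α := Real.hasDerivAt_log (ne_of_gt h0)
  have := ha.sub hb
  have hne1 : (1:ℝ) - α ≠ 0 := ne_of_gt (by linarith)
  have e : -(1 - α)⁻¹ - α⁻¹ = -(1 / (α * (1 - α))) := by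
    field_simp
    ring
  rw [show uof = fun z => Real.log (1 - z) - Real.log z from rfl, ← e]
  exact this

lemma exp_uof {α : ℝ} (h0 : 0 < α) (h1 : α < 1) : exp (uof α) = (1 - α) / α := by
  rw [uof, Real.exp_sub, Real.exp_log (by linarith), Real.exp_log h0]

lemma one_add_exp_uof {α : ℝ} (h0 : 0 < α) (h1 : α < 1) :
    1 + exp (uof α) = 1 / α := by
  rw [exp_uof h0 h1]; field_simp; ring

lemma sg_uof {α : ℝ} (h0 : 0 < α) (h1 : α < 1) : sg (uof α) = 1 - α := by
  rw [sg]
  rw [show 1 + exp (uof α) = 1 / α from one_add_exp_uof h0 h1, exp_uof h0 h1]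
  field_simp

lemma fs_uof {α : ℝ} (h0 : 0 < α) (h1 : α < 1) : fs (uof α) = -Real.log α := by
  rw [fs, one_add_exp_uof h0 h1, one_div, Real.log_inv]

lemma fs_t_uof {α t : ℝ} (h0 : 0 < α) (h1 : α < 1) :
    fs (t * uof α) = Real.log (α ^ t + (1 - α) ^ t) - t * Real.log α := by
  have hE : exp (t * uof α) = ((1 - α) / α) ^ t := by
    rw [Real.rpow_def_of_pos (div_pos (by linarith) h0), Real.log_div (by linarith) (ne_of_gt h0)]
    rw [uof, mul_comm]
  have hA : α ^ t + (1 - α) ^ t = α ^ t * (1 + exp (t * uof α)) := by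
    rw [hE, Real.div_rpow (by linarith) h0.le]
    field_simp [ne_of_gt (Real.rpow_pos_of_pos h0 t)]
  rw [fs, hA, Real.log_mul (ne_of_gt (Real.rpow_pos_of_pos h0 t)) (by positivity),
    Real.log_rpow h0]
  ring

lemma Rent_eq_RRf {α t : ℝ} (h0 : 0 < α) (h1 : α < 1) :
    Rent t α = RRf t (uof α) := by
  rcases eq_or_ne t 1 with h | h
  · subst h
    rw [Rent, if_pos rfl, RRf, if_pos rfl, Wf, fs_uof h0 h1, sg_uof h0 h1, uof]
    ring
  · rw [Rent, if_neg h, RRf, if_neg h, fs_t_uof h0 h1, fs_uof h0 h1]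
    have ht1 : (1:ℝ) - t ≠ 0 := by
      intro hc; apply h; linarith
    have ht2 : t - 1 ≠ 0 := by
      intro hc; apply h; linarith
    rw [show t * -Real.log α - (Real.log (α ^ t + (1 - α) ^ t) - t * Real.log α) =
      -Real.log (α ^ t + (1 - α) ^ t) from by ring]
    rw [div_eq_div_iff ht1 ht2]
    ring
end
section
open Real Set Filter Topology

lemma DD_eq {t u : ℝ} (ht : 0 < t) : DD t u = -(KK (u := u) t) * RRf t u := by
  rcases eq_or_ne t 1 with h | h
  · subst h
    rw [DD, if_pos rfl, KK, if_pos rfl, RRf, if_pos rfl]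
    rw [neg_mul, neg_inj, div_mul_cancel₀ _ (Wf_pos u).ne']
  · have hA : t * fs u - fs (t * u) ≠ 0 := by
      have := RRf_pos ht u
      rw [RRf, if_neg h] at this
      intro hc
      rw [hc, zero_div] at this
      exact lt_irrefl 0 this
    have ht1 : t - 1 ≠ 0 := sub_ne_zero.mpr h
    rw [DD, if_neg h, KK, if_neg h, RRf, if_neg h]
    have hp2 : p2 u t - p2 u 1 = (t * fs u - fs (t * u)) / t := by
      rw [p2, p2]
      field_simp [ne_of_gt ht]
      ring
    have hp1 : p1 u t - p1 u 1 = sg (t * u) - sg u := by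
      rw [p1, p1, one_mul]
    rw [hp1, hp2]
    field_simp
    ring
end
section
open Real Set Filter Topology

lemma hasDerivAt_logRent {t α : ℝ} (ht : 0 < t) (h0 : 0 < α) (h1 : α < 1) :
    HasDerivAt (fun x => Real.log (Rent t x))
      (KK (u := uof α) t / (α * (1 - α))) α := by
  have hR := RRf_pos ht (uof α)
  have hcomp : HasDerivAt (fun x => RRf t (uof x))
      (DD t (uof α) * -(1 / (α * (1 - α)))) α :=
    (hasDerivAt_RRf t (uof α)).comp α (hasDerivAt_uof h0 h1)
  have hlog : HasDerivAt (fun x => Real.log (RRf t (uof x)))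
      (DD t (uof α) * -(1 / (α * (1 - α))) / RRf t (uof α)) α :=
    hcomp.log (ne_of_gt hR)
  have e : DD t (uof α) * -(1 / (α * (1 - α))) / RRf t (uof α)
      = KK (u := uof α) t / (α * (1 - α)) := by
    rw [DD_eq ht]
    have hne1 : (1:ℝ) - α ≠ 0 := ne_of_gt (by linarith)
    field_simp [ne_of_gt hR]
  rw [e] at hlog
  apply hlog.congr_of_eventuallyEq
  filter_upwards [Ioo_mem_nhds h0 h1] with x hx
  rw [Rent_eq_RRf hx.1 hx.2]

lemma dr_pos {u c : ℝ} (hu : 0 < u) (hc : 0 < c) : 0 < dr u c := by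
  rw [dr]
  apply div_pos _ hu
  rw [psi]
  exact mul_pos (mul_pos hc hu) (hz_pos (mul_pos hc hu))

lemma KK_pos {t u : ℝ} (ht : 0 < t) (hu : 0 < u) : 0 < KK (u := u) t := by
  rcases lt_trichotomy t 1 with h | h | h
  · obtain ⟨c, hc, heq⟩ := KK_lt_of_lt_one hu ht h
    rw [heq]; exact dr_pos hu (lt_trans ht hc.1)
  · rw [h, KK, if_pos rfl]
    exact div_pos (rh_pos hu) (Wf_pos u)
  · obtain ⟨c, hc, heq⟩ := KK_gt_of_gt_one hu h
    rw [heq]; exact dr_pos hu (lt_trans one_pos hc.1)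

lemma uof_pos {α : ℝ} (h0 : 0 < α) (h1 : α < 1/2) : 0 < uof α := by
  rw [uof, sub_pos]
  exact Real.log_lt_log h0 (by linarith)

lemma logRent_strictMono {t : ℝ} (ht : 0 < t) :
    StrictMonoOn (fun α => Real.log (Rent t α)) (Ioc (0:ℝ) (1/2)) := by
  apply strictMonoOn_of_deriv_pos (convex_Ioc 0 (1/2))
  · intro x hx
    exact (hasDerivAt_logRent ht hx.1 (by linarith [hx.2])).continuousAt.continuousWithinAt
  · intro x hx
    rw [interior_Ioc] at hx
    rw [(hasDerivAt_logRent ht hx.1 (by linarith [hx.2])).deriv]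
    apply div_pos (KK_pos ht (uof_pos hx.1 hx.2))
    nlinarith [hx.1, hx.2]

lemma logRatio_strictMono {r s : ℝ} (hr : 0 < r) (hrs : r < s) :
    StrictMonoOn (fun α => Real.log (Rent s α) - Real.log (Rent r α))
      (Ioc (0:ℝ) (1/2)) := by
  have hs : 0 < s := lt_trans hr hrs
  apply strictMonoOn_of_deriv_pos (convex_Ioc 0 (1/2))
  · intro x hx
    exact ((hasDerivAt_logRent hs hx.1 (by linarith [hx.2])).sub
      (hasDerivAt_logRent hr hx.1 (by linarith [hx.2]))).continuousAt.continuousWithinAt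
  · intro x hx
    rw [interior_Ioc] at hx
    rw [show deriv (fun α => Real.log (Rent s α) - Real.log (Rent r α)) x = _ from
      ((hasDerivAt_logRent hs hx.1 (by linarith [hx.2])).sub
      (hasDerivAt_logRent hr hx.1 (by linarith [hx.2]))).deriv]
    rw [div_sub_div_same]
    apply div_pos
    · have := crux (uof_pos hx.1 hx.2) hr hrs
      linarith
    · nlinarith [hx.1, hx.2]

lemma Rent_pos {t α : ℝ} (ht : 0 < t) (h0 : 0 < α) (h1 : α ≤ 1/2) : 0 < Rent t α := by
  rw [Rent_eq_RRf h0 (by linarith)]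
  exact RRf_pos ht _
end

/-- Lemma: for `0 < r < s` and `α, β, γ ∈ (0, 1/2]`, if
`R_r(α) = R_r(β) + R_r(γ)` then `R_s(α) > R_s(β) + R_s(γ)` for the binary Rényi entropy. -/
theorem renyi_additivity_lemma
    (r s α β γ : ℝ) (hr : 0 < r) (hrs : r < s)
    (hα : α ∈ Set.Ioc (0 : ℝ) (1/2)) (hβ : β ∈ Set.Ioc (0 : ℝ) (1/2))
    (hγ : γ ∈ Set.Ioc (0 : ℝ) (1/2))
    (heq : Rent r α = Rent r β + Rent r γ) :
    Rent s α > Rent s β + Rent s γ := by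
  obtain ⟨hα0, hα2⟩ := hα
  obtain ⟨hβ0, hβ2⟩ := hβ
  obtain ⟨hγ0, hγ2⟩ := hγ
  have hs : 0 < s := lt_trans hr hrs
  have hRrα := Rent_pos hr hα0 hα2
  have hRrβ := Rent_pos hr hβ0 hβ2
  have hRrγ := Rent_pos hr hγ0 hγ2
  have hRsα := Rent_pos hs hα0 hα2
  have hRsβ := Rent_pos hs hβ0 hβ2
  have hRsγ := Rent_pos hs hγ0 hγ2
  -- β < α and γ < α
  have hRrβα : Rent r β < Rent r α := by linarith
  have hRrγα : Rent r γ < Rent r α := by linarith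
  have hβα : β < α := by
    by_contra hc
    push_neg at hc
    rcases eq_or_lt_of_le hc with h | h
    · rw [h] at hRrβα; exact lt_irrefl _ hRrβα
    · have := logRent_strictMono hr ⟨hα0, hα2⟩ ⟨hβ0, hβ2⟩ h
      have h2 : Rent r α < Rent r β := by
        have := Real.exp_lt_exp.2 this
        rwa [Real.exp_log hRrα, Real.exp_log hRrβ] at this
      linarith
  have hγα : γ < α := by
    by_contra hc
    push_neg at hc
    rcases eq_or_lt_of_le hc with h | h
    · rw [h] at hRrγα; exact lt_irrefl _ hRrγα
    · have := logRent_strictMono hr ⟨hα0, hα2⟩ ⟨hγ0, hγ2⟩ h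
      have h2 : Rent r α < Rent r γ := by
        have := Real.exp_lt_exp.2 this
        rwa [Real.exp_log hRrα, Real.exp_log hRrγ] at this
      linarith
  -- cross inequalities
  set q : ℝ := Rent s α / Rent r α with hqdef
  have cross : ∀ x : ℝ, 0 < x → x ≤ 1/2 → x < α → Rent s x < q * Rent r x := by
    intro x hx0 hx2 hxα
    have h := logRatio_strictMono hr hrs ⟨hx0, hx2⟩ ⟨hα0, hα2⟩ hxα
    have h2 := Real.exp_lt_exp.2 h
    rw [Real.exp_sub, Real.exp_sub, Real.exp_log (Rent_pos hs hx0 hx2),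
      Real.exp_log (Rent_pos hr hx0 hx2), Real.exp_log hRsα, Real.exp_log hRrα] at h2
    rw [div_lt_div_iff₀ (Rent_pos hr hx0 hx2) hRrα] at h2
    rw [hqdef, div_mul_eq_mul_div, lt_div_iff₀ hRrα]
    linarith
  have hcβ := cross β hβ0 hβ2 hβα
  have hcγ := cross γ hγ0 hγ2 hγα
  have hqα : q * Rent r α = Rent s α := by
    rw [hqdef, div_mul_cancel₀ _ (ne_of_gt hRrα)]
  calc Rent s β + Rent s γ < q * Rent r β + q * Rent r γ := by linarith
    _ = q * (Rent r β + Rent r γ) := by ring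
    _ = q * Rent r α := by rw [heq]
    _ = Rent s α := hqα
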